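/- With ϱ̌₀ = π and ϱ̌ᵢ = g(ϱ̌_{i-1}) where g(ϱ) = arccos(((π-ϱ)cos ϱ + sin ϱ)/π), the quantity ρ_n := Σ_{i=0}^{n-1} (sin ϱ̌ᵢ/π) ∏_{j=i+1}^{n-1} ((π - ϱ̌ⱼ)/π) satisfies 0 < ρ_n ≤ 1 for all n ≥ 2. -/

import Mathlib

/-- `g(ϱ) = arccos(((π - ϱ) cos ϱ + sin ϱ)/π)`. -/
noncomputable def gAngle (ϱ : ℝ) : ℝ :=
  Real.arccos (((Real.pi - ϱ) * Real.cos ϱ + Real.sin ϱ) / Real.pi)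

/-- `ρ_n = Σ_{i=0}^{n-1} (sin ϱ̌ᵢ / π) ∏_{j=i+1}^{n-1} ((π - ϱ̌ⱼ)/π)` where
`ϱ̌ᵢ = g^[i](π)`. -/
noncomputable def rhoN (n : ℕ) : ℝ :=
  ∑ i ∈ Finset.range n,
    (Real.sin (gAngle^[i] Real.pi) / Real.pi) *
      ∏ j ∈ Finset.Ico (i + 1) n, ((Real.pi - gAngle^[j] Real.pi) / Real.pi)

lemma iter_mem (i : ℕ) : 0 ≤ gAngle^[i] Real.pi ∧ gAngle^[i] Real.pi ≤ Real.pi := by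
  cases i with
  | zero => simp [Real.pi_pos.le]
  | succ k =>
    rw [Function.iterate_succ_apply']
    exact ⟨Real.arccos_nonneg _, Real.arccos_le_pi _⟩

lemma gAngle_lt_pi {ϱ : ℝ} (h0 : 0 ≤ ϱ) (h1 : ϱ ≤ Real.pi) : gAngle ϱ < Real.pi := by
  have hπ := Real.pi_pos
  have hs := Real.sin_nonneg_of_nonneg_of_le_pi h0 h1
  have hc := Real.neg_one_le_cos ϱ
  have key : -Real.pi < (Real.pi - ϱ) * Real.cos ϱ + Real.sin ϱ := by
    rcases h0.eq_or_lt with h | h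
    · rw [← h]; simp [Real.cos_zero]; linarith
    · nlinarith [mul_nonneg (sub_nonneg.mpr h1) (by linarith : (0:ℝ) ≤ Real.cos ϱ + 1)]
  have hx : (-1 : ℝ) < ((Real.pi - ϱ) * Real.cos ϱ + Real.sin ϱ) / Real.pi := by
    rw [lt_div_iff₀ hπ]; linarith
  exact lt_of_le_of_ne (Real.arccos_le_pi _)
    (fun he => absurd (Real.arccos_eq_pi.mp he) (not_le.mpr hx))

lemma rhoN_succ (n : ℕ) :
    rhoN (n + 1) = rhoN n * ((Real.pi - gAngle^[n] Real.pi) / Real.pi)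
      + Real.sin (gAngle^[n] Real.pi) / Real.pi := by
  unfold rhoN
  rw [Finset.sum_range_succ, Finset.Ico_self, Finset.prod_empty, mul_one, Finset.sum_mul]
  congr 1
  refine Finset.sum_congr rfl fun i hi => ?_
  rw [Finset.prod_Ico_succ_top (Finset.mem_range.mp hi),
    mul_assoc]

lemma rhoN_two : rhoN 2 = 1 / Real.pi := by
  have ha1 : gAngle^[1] Real.pi = Real.pi / 2 := by
    simp [gAngle, Real.sin_pi, Real.cos_pi, Real.arccos_zero]
  have h2 : rhoN 2 = rhoN 1 * ((Real.pi - gAngle^[1] Real.pi) / Real.pi)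
      + Real.sin (gAngle^[1] Real.pi) / Real.pi := rhoN_succ 1
  have h1 : rhoN 1 = 0 := by
    simp [rhoN, Real.sin_pi]
  rw [h2, h1, ha1, Real.sin_pi_div_two]
  ring

theorem stmt_17 (n : ℕ) (hn : 2 ≤ n) : 0 < rhoN n ∧ rhoN n ≤ 1 := by
  have hπ := Real.pi_pos
  induction n with
  | zero => omega
  | succ m ih =>
    rcases Nat.lt_or_ge m 2 with hm | hm
    · interval_cases m
      · omega
      · rw [rhoN_two]
        constructor
        · positivity
        · rw [div_le_one hπ]; linarith [Real.pi_gt_three]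
    · obtain ⟨hpos, hle⟩ := ih hm
      obtain ⟨k, rfl⟩ : ∃ k, m = k + 1 := ⟨m - 1, by omega⟩
      set a := gAngle^[k + 1] Real.pi with ha
      obtain ⟨ha0, haπ⟩ := iter_mem (k + 1)
      have halt : a < Real.pi := by
        rw [ha, Function.iterate_succ_apply']
        exact gAngle_lt_pi (iter_mem k).1 (iter_mem k).2
      have hs0 : 0 ≤ Real.sin a := Real.sin_nonneg_of_nonneg_of_le_pi ha0 haπ
      rw [rhoN_succ, ← ha]
      constructor
      · have : 0 < (Real.pi - a) / Real.pi := div_pos (by linarith) hπ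
        have := mul_pos hpos this
        linarith [div_nonneg hs0 hπ.le]
      · have hsin : Real.sin a ≤ a := Real.sin_le ha0
        have hc : (0:ℝ) ≤ (Real.pi - a) / Real.pi := div_nonneg (by linarith) hπ.le
        have h2 : rhoN (k + 1) * ((Real.pi - a) / Real.pi) ≤ 1 * ((Real.pi - a) / Real.pi) :=
          mul_le_mul_of_nonneg_right hle hc
        have h3 : (Real.pi - a) / Real.pi + Real.sin a / Real.pi ≤ 1 := by
          rw [← add_div, div_le_one hπ]; linarith
        rw [one_mul] at h2
        linarith
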